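/- Let A₀ be a fixed deterministic 3×3 real matrix and let B₁ = e₃b₁ᵀ, B₂ = e₃b₂ᵀ where b₁ and b₂ are independent random vectors in ℝ³ with finite expectations. For the block matrix A_L = [[A₀,0,0],[B₁,A₀,0],[0,B₂,A₀]], the expectation of every power satisfies 𝔼[A_L^k] = (𝔼[A_L])^k for all k ∈ ℕ. -/

import Mathlib

open Matrix MeasureTheory ProbabilityTheory

/-- Entrywise expectation of a random matrix. -/
noncomputable def matrixExpect {Ω : Type*} [MeasurableSpace Ω] (μ : Measure Ω)
    {m n : Type*} [Fintype m] [Fintype n]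
    (M : Ω → Matrix m n ℝ) : Matrix m n ℝ :=
  Matrix.of fun i j => ∫ ω, M ω i j ∂μ

/-- The 9×9 random block matrix `A_L = [[A₀,0,0],[B₁,A₀,0],[0,B₂,A₀]]` with
`B_i = e₃ b_iᵀ`. -/
noncomputable def randBlockAL {Ω : Type*} (A0 : Matrix (Fin 3) (Fin 3) ℝ)
    (b1 b2 : Ω → Fin 3 → ℝ) (ω : Ω) :
    Matrix (Fin 3 × Fin 3) (Fin 3 × Fin 3) ℝ :=
  Matrix.of fun pa qb =>
    if pa.1 = qb.1 then A0 pa.2 qb.2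
    else if pa.1 = 1 ∧ qb.1 = 0 then
      (vecMulVec (fun a => if a = 2 then (1:ℝ) else 0) (b1 ω)) pa.2 qb.2
    else if pa.1 = 2 ∧ qb.1 = 1 then
      (vecMulVec (fun a => if a = 2 then (1:ℝ) else 0) (b2 ω)) pa.2 qb.2
    else 0

/-! ### Auxiliary definitions -/

/-- The third standard basis vector `e₃`. -/
def eVec : Fin 3 → ℝ := fun a => if a = 2 then (1:ℝ) else 0

/-- `Dmat A0 k v` is the `(1,0)` (resp. `(2,1)`) block of `A_L ^ k`:
`∑_{a+b=k-1} A0^a (e₃ vᵀ) A0^b`, given by recursion. -/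
noncomputable def Dmat (A0 : Matrix (Fin 3) (Fin 3) ℝ) :
    ℕ → (Fin 3 → ℝ) → Matrix (Fin 3) (Fin 3) ℝ
  | 0, _ => 0
  | (k+1), v => Dmat A0 k v * A0 + A0 ^ k * vecMulVec eVec v

/-- `Fmat A0 k v w` is the `(2,0)` block of `A_L ^ k`. -/
noncomputable def Fmat (A0 : Matrix (Fin 3) (Fin 3) ℝ) :
    ℕ → (Fin 3 → ℝ) → (Fin 3 → ℝ) → Matrix (Fin 3) (Fin 3) ℝ
  | 0, _, _ => 0
  | (k+1), v, w => Fmat A0 k v w * A0 + Dmat A0 k w * vecMulVec eVec v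

/-- Deterministic version of `randBlockAL`. -/
noncomputable def ALmat (A0 : Matrix (Fin 3) (Fin 3) ℝ) (v w : Fin 3 → ℝ) :
    Matrix (Fin 3 × Fin 3) (Fin 3 × Fin 3) ℝ :=
  Matrix.of fun pa qb =>
    if pa.1 = qb.1 then A0 pa.2 qb.2
    else if pa.1 = 1 ∧ qb.1 = 0 then (vecMulVec eVec v) pa.2 qb.2
    else if pa.1 = 2 ∧ qb.1 = 1 then (vecMulVec eVec w) pa.2 qb.2
    else 0

/-- Explicit block form of `A_L ^ k`. -/
noncomputable def Bmat (A0 : Matrix (Fin 3) (Fin 3) ℝ) (k : ℕ) (v w : Fin 3 → ℝ) :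
    Matrix (Fin 3 × Fin 3) (Fin 3 × Fin 3) ℝ :=
  Matrix.of fun pa qb =>
    if pa.1 = qb.1 then (A0 ^ k) pa.2 qb.2
    else if pa.1 = 1 ∧ qb.1 = 0 then Dmat A0 k v pa.2 qb.2
    else if pa.1 = 2 ∧ qb.1 = 1 then Dmat A0 k w pa.2 qb.2
    else if pa.1 = 2 ∧ qb.1 = 0 then Fmat A0 k v w pa.2 qb.2
    else 0

lemma Bmat_zero (A0 : Matrix (Fin 3) (Fin 3) ℝ) (v w : Fin 3 → ℝ) :
    Bmat A0 0 v w = 1 := by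
  ext ⟨p1, p⟩ ⟨q1, q⟩
  by_cases h : p1 = q1 <;>
    simp [Bmat, Matrix.one_apply, Prod.ext_iff, h, Dmat, Fmat]

lemma Bmat_succ (A0 : Matrix (Fin 3) (Fin 3) ℝ) (v w : Fin 3 → ℝ) (k : ℕ) :
    Bmat A0 k v w * ALmat A0 v w = Bmat A0 (k+1) v w := by
  ext ⟨p1, p⟩ ⟨q1, q⟩
  rw [Matrix.mul_apply, Fintype.sum_prod_type, Fin.sum_univ_three]
  fin_cases p1 <;> fin_cases q1 <;>
    simp [Bmat, ALmat, Dmat, Fmat, mul_zero, zero_mul, Finset.sum_const_zero,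
      ← Matrix.mul_apply, ← Matrix.add_apply, pow_succ]

lemma pow_ALmat (A0 : Matrix (Fin 3) (Fin 3) ℝ) (v w : Fin 3 → ℝ) (k : ℕ) :
    (ALmat A0 v w) ^ k = Bmat A0 k v w := by
  induction k with
  | zero => rw [pow_zero, Bmat_zero]
  | succ k ih => rw [pow_succ, ih, Bmat_succ]

section Integrals
variable {Ω : Type*} [MeasurableSpace Ω] (μ : Measure Ω) [IsProbabilityMeasure μ]
  (A0 : Matrix (Fin 3) (Fin 3) ℝ)

lemma Dmat_measurable (k : ℕ) (p q : Fin 3) :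
    Measurable (fun u : Fin 3 → ℝ => Dmat A0 k u p q) := by
  induction k generalizing p q with
  | zero => simpa [Dmat] using measurable_const
  | succ k ih =>
    have : (fun u : Fin 3 → ℝ => Dmat A0 (k+1) u p q)
        = fun u => (∑ l, Dmat A0 k u p l * A0 l q)
          + ∑ l, (A0 ^ k) p l * (eVec l * u q) := by
      funext u
      simp [Dmat, Matrix.add_apply, Matrix.mul_apply, vecMulVec_apply]
    rw [this]
    exact ((Finset.measurable_sum _ fun l _ => (ih p l).mul_const _).add
      (Finset.measurable_sum _ fun l _ =>
        (((measurable_pi_apply q).const_mul _).const_mul _)))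

lemma Dmat_int (b : Ω → Fin 3 → ℝ) (hb : ∀ j, Integrable (fun ω => b ω j) μ)
    (k : ℕ) (p q : Fin 3) :
    Integrable (fun ω => Dmat A0 k (b ω) p q) μ ∧
      ∫ ω, Dmat A0 k (b ω) p q ∂μ = Dmat A0 k (fun j => ∫ ω, b ω j ∂μ) p q := by
  induction k generalizing p q with
  | zero => simp [Dmat, integrable_const]
  | succ k ih =>
    have hrw : ∀ (v : Fin 3 → ℝ), Dmat A0 (k+1) v p q
        = (∑ l, Dmat A0 k v p l * A0 l q) + ∑ l, (A0 ^ k) p l * eVec l * v q := by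
      intro v
      simp [Dmat, Matrix.add_apply, Matrix.mul_apply, vecMulVec_apply, mul_assoc]
    have h1 : ∀ l, Integrable (fun ω => Dmat A0 k (b ω) p l * A0 l q) μ :=
      fun l => ((ih p l).1).mul_const _
    have h2 : ∀ l, Integrable (fun ω => (A0 ^ k) p l * eVec l * b ω q) μ :=
      fun l => (hb q).const_mul _
    constructor
    · simp only [hrw]
      exact ((integrable_finset_sum _ fun l _ => h1 l).add
        (integrable_finset_sum _ fun l _ => h2 l))
    · simp only [hrw]
      rw [integral_add (integrable_finset_sum _ fun l _ => h1 l)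
        (integrable_finset_sum _ fun l _ => h2 l),
        integral_finset_sum _ fun l _ => h1 l,
        integral_finset_sum _ fun l _ => h2 l]
      congr 1
      · exact Finset.sum_congr rfl fun l _ => by rw [integral_mul_const, (ih p l).2]
      · exact Finset.sum_congr rfl fun l _ => by rw [integral_const_mul]

lemma Fmat_int (b1 b2 : Ω → Fin 3 → ℝ)
    (hb1 : ∀ j, Integrable (fun ω => b1 ω j) μ)
    (hb2 : ∀ j, Integrable (fun ω => b2 ω j) μ)
    (hindep : IndepFun b1 b2 μ)
    (k : ℕ) (p q : Fin 3) :
    Integrable (fun ω => Fmat A0 k (b1 ω) (b2 ω) p q) μ ∧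
      ∫ ω, Fmat A0 k (b1 ω) (b2 ω) p q ∂μ
        = Fmat A0 k (fun j => ∫ ω, b1 ω j ∂μ) (fun j => ∫ ω, b2 ω j ∂μ) p q := by
  induction k generalizing p q with
  | zero => simp [Fmat, integrable_const]
  | succ k ih =>
    have hrw : ∀ (v w : Fin 3 → ℝ), Fmat A0 (k+1) v w p q
        = (∑ l, Fmat A0 k v w p l * A0 l q)
          + ∑ l, eVec l * (Dmat A0 k w p l * v q) := by
      intro v w
      have h0 : Fmat A0 (k+1) v w p q
          = (Fmat A0 k v w * A0) p q + (Dmat A0 k w * vecMulVec eVec v) p q := by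
        simp [Fmat]
      rw [h0, Matrix.mul_apply, Matrix.mul_apply]
      congr 1
      exact Finset.sum_congr rfl fun l _ => by rw [vecMulVec_apply]; ring
    have hDint := fun l => (Dmat_int μ A0 b2 hb2 k p l).1
    have hindl : ∀ l, IndepFun (fun ω => Dmat A0 k (b2 ω) p l) (fun ω => b1 ω q) μ :=
      fun l => (hindep.symm.comp (Dmat_measurable A0 k p l) (measurable_pi_apply q))
    have hprod : ∀ l, Integrable (fun ω => Dmat A0 k (b2 ω) p l * b1 ω q) μ :=
      fun l => (hindl l).integrable_mul (hDint l) (hb1 q)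
    have h1 : ∀ l, Integrable (fun ω => Fmat A0 k (b1 ω) (b2 ω) p l * A0 l q) μ :=
      fun l => ((ih p l).1).mul_const _
    have h2 : ∀ l, Integrable (fun ω => eVec l * (Dmat A0 k (b2 ω) p l * b1 ω q)) μ :=
      fun l => (hprod l).const_mul _
    constructor
    · simp only [hrw]
      exact ((integrable_finset_sum _ fun l _ => h1 l).add
        (integrable_finset_sum _ fun l _ => h2 l))
    · simp only [hrw]
      rw [integral_add (integrable_finset_sum _ fun l _ => h1 l)
        (integrable_finset_sum _ fun l _ => h2 l),
        integral_finset_sum _ fun l _ => h1 l,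
        integral_finset_sum _ fun l _ => h2 l]
      congr 1
      · exact Finset.sum_congr rfl fun l _ => by rw [integral_mul_const, (ih p l).2]
      · refine Finset.sum_congr rfl fun l _ => ?_
        rw [integral_const_mul]
        congr 1
        have := (hindl l).integral_mul_eq_mul_integral (hDint l).1 (hb1 q).1
        simpa [Pi.mul_apply, (Dmat_int μ A0 b2 hb2 k p l).2] using this

end Integrals

/-- For the block matrix `A_L = [[A₀,0,0],[B₁,A₀,0],[0,B₂,A₀]]` with `A₀`
deterministic and `b₁, b₂` independent integrable random vectors, the entrywise
expectation of every power satisfies `𝔼[A_L^k] = (𝔼[A_L])^k`. -/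
theorem expect_pow_randBlockAL {Ω : Type*} [MeasurableSpace Ω]
    (μ : Measure Ω) [IsProbabilityMeasure μ]
    (A0 : Matrix (Fin 3) (Fin 3) ℝ) (b1 b2 : Ω → Fin 3 → ℝ)
    (hb1 : ∀ j, Integrable (fun ω => b1 ω j) μ)
    (hb2 : ∀ j, Integrable (fun ω => b2 ω j) μ)
    (hindep : IndepFun b1 b2 μ)
    (hmeas1 : Measurable b1) (hmeas2 : Measurable b2)
    (hpowint : ∀ (k : ℕ) (i j : Fin 3 × Fin 3),
      Integrable (fun ω => ((randBlockAL A0 b1 b2 ω) ^ k) i j) μ) :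
    ∀ k : ℕ,
      matrixExpect μ (fun ω => (randBlockAL A0 b1 b2 ω) ^ k)
        = (matrixExpect μ (randBlockAL A0 b1 b2)) ^ k := by
  intro k
  set m1 : Fin 3 → ℝ := fun j => ∫ ω, b1 ω j ∂μ with hm1
  set m2 : Fin 3 → ℝ := fun j => ∫ ω, b2 ω j ∂μ with hm2
  have hAL : ∀ ω, randBlockAL A0 b1 b2 ω = ALmat A0 (b1 ω) (b2 ω) := fun _ => rfl
  have hexp : matrixExpect μ (randBlockAL A0 b1 b2) = ALmat A0 m1 m2 := by
    ext ⟨p1, p⟩ ⟨q1, q⟩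
    show ∫ ω, randBlockAL A0 b1 b2 ω (p1, p) (q1, q) ∂μ = _
    simp only [hAL]
    fin_cases p1 <;> fin_cases q1 <;>
      simp [ALmat, vecMulVec_apply, integral_const, measure_univ, eVec,
        integral_const_mul, hm1, hm2] <;>
      (split_ifs <;> simp)
  rw [hexp, pow_ALmat]
  ext ⟨p1, p⟩ ⟨q1, q⟩
  show ∫ ω, ((randBlockAL A0 b1 b2 ω) ^ k) (p1, p) (q1, q) ∂μ = _
  simp only [hAL, pow_ALmat]
  fin_cases p1 <;> fin_cases q1 <;>
    simp [Bmat, integral_const, measure_univ,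
      (Dmat_int μ A0 b1 hb1 k p q).2, (Dmat_int μ A0 b2 hb2 k p q).2,
      (Fmat_int μ A0 b1 b2 hb1 hb2 hindep k p q).2, hm1, hm2]
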